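/- Let A ∈ M_{p,q} and write A_+ := Π_+(A) and A_− := A − A_+ (so A_+ ∈ M_{p,0}, A_− ∈ M_{0,q} and A = A_+ + A_−). Then there exists ε > 0 such that for every A'_+ ∈ M_{p,0} with ‖A'_+ − A_+‖ < ε, the matrix A'_+ + A_− belongs to M_{p,q}. -/

import Mathlib

open scoped Classical RealInnerProductSpace
open Matrix Set

noncomputable section

abbrev Mat (n : ℕ) : Type := Matrix (Fin n) (Fin n) ℝ

abbrev Em (m : ℕ) : Type := EuclideanSpace ℝ (Fin m)

attribute [instance] Matrix.frobeniusNormedAddCommGroup Matrix.frobeniusNormedSpace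

/-- The trace (Frobenius) inner product `⟨A,B⟩ = tr(AᵀB)` on matrices; for symmetric
matrices this is `tr(AB)`. -/
def minner {n : ℕ} (A B : Mat n) : ℝ := (Aᵀ * B).trace

/-- `P` is an orthogonal matrix. -/
def IsOrthoMat {n : ℕ} (P : Mat n) : Prop := P * Pᵀ = 1 ∧ Pᵀ * P = 1

/-- `(P, lam)` is an eigenvalue decomposition of `A` with orthogonal `P` and
nonincreasing eigenvalue vector `lam`: `A = P·Diag(lam)·Pᵀ`. -/
def IsEigDecomp {n : ℕ} (A P : Mat n) (lam : Fin n → ℝ) : Prop :=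
  IsOrthoMat P ∧ Antitone lam ∧ A = P * Matrix.diagonal lam * Pᵀ

/-- The stratum `M_{p,q}` of symmetric matrices with exactly `p` positive and `q` negative
eigenvalues. -/
def stratum (n p q : ℕ) : Set (Mat n) :=
  {A | ∃ P lam, IsEigDecomp A P lam ∧
    {i : Fin n | 0 < lam i}.ncard = p ∧ {i : Fin n | lam i < 0}.ncard = q}

/-- The metric projection `Π₊` onto the positive semidefinite cone (defined through an
eigenvalue decomposition; the value is independent of the choice of decomposition). -/
noncomputable def piPlus {n : ℕ} (A : Mat n) : Mat n :=
  if h : ∃ P lam, IsEigDecomp A P lam then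
    h.choose * Matrix.diagonal (fun i => max (h.choose_spec.choose i) 0) * h.chooseᵀ
  else 0

variable {m n : ℕ}

/-- `G(z) = g(x) + y`. -/
def Gmap (g : Em m → Mat n) (z : Em m × Mat n) : Mat n := g z.1 + z.2

/-- The adjoint `∇g(x) : Sⁿ → ℝᵐ` of the derivative `g'(x)`, characterized by
`⟨∇g(x)H, v⟩ = ⟨H, g'(x)v⟩`. -/
def gradg (g : Em m → Mat n) (x : Em m) (H : Mat n) : Em m :=
  (EuclideanSpace.equiv (Fin m) ℝ).symm
    fun k => (Hᵀ * fderiv ℝ g x (EuclideanSpace.single k 1)).trace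

/-- The Lagrangian `L(x,y) = f(x) + ⟨y, g(x)⟩`. -/
def Lfun (f : Em m → ℝ) (g : Em m → Mat n) (x : Em m) (y : Mat n) : ℝ :=
  f x + minner y (g x)

/-- The Hessian `∇²ₓₓL(x,y)` of `x ↦ L(x,y)`, as a continuous linear map `ℝᵐ → ℝᵐ`. -/
def hessL (f : Em m → ℝ) (g : Em m → Mat n) (x : Em m) (y : Mat n) : Em m →L[ℝ] Em m :=
  fderiv ℝ (fun u => gradient (fun w => Lfun f g w y) u) x

/-- The KKT mapping `F(z) = (∇f(x) + ∇g(x)y, −g(x) + Π₊(G(z)))`. -/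
def KKTF (f : Em m → ℝ) (g : Em m → Mat n) (z : Em m × Mat n) : Em m × Mat n :=
  (gradient f z.1 + gradg g z.1 z.2, - g z.1 + piPlus (Gmap g z))

/-- The lifted stratum `M̃_{p,q} = {z = (x,y) ∈ ℝᵐ × Sⁿ : G(z) ∈ M_{p,q}}`. -/
def lstratum (g : Em m → Mat n) (p q : ℕ) : Set (Em m × Mat n) :=
  {z | z.2.IsSymm ∧ Gmap g z ∈ stratum n p q}

/-- The norm `‖(u,H)‖ = sqrt(‖u‖² + ‖H‖²)` on `ℝᵐ × Sⁿ` (Frobenius norm on matrices). -/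
def pnorm {m n : ℕ} (w : Em m × Mat n) : ℝ := Real.sqrt (‖w.1‖ ^ 2 + ‖w.2‖ ^ 2)

/-- The weak strict Robinson constraint qualification (W-SRCQ) at `z`:
`g'(x)[ℝᵐ] + {PBPᵀ : B ∈ Sⁿ, B_{βγ} = 0, B_{γγ} = 0} = Sⁿ`
(for any eigenvalue decomposition `(P, lam)` of `G(z)`; independent of the choice). -/
def WSRCQ (g : Em m → Mat n) (z : Em m × Mat n) : Prop :=
  ∀ P lam, IsEigDecomp (Gmap g z) P lam →
    ∀ C : Mat n, C.IsSymm →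
      ∃ (v : Em m) (B : Mat n), B.IsSymm ∧
        (∀ i j, lam i = 0 → lam j < 0 → B i j = 0) ∧
        (∀ i j, lam i < 0 → lam j < 0 → B i j = 0) ∧
        C = fderiv ℝ g z.1 v + P * B * Pᵀ

/-- The constraint nondegeneracy at `z`:
`g'(x)[ℝᵐ] + {PBPᵀ : B ∈ Sⁿ, B_{ββ} = 0, B_{βγ} = 0, B_{γγ} = 0} = Sⁿ`. -/
def CNondeg (g : Em m → Mat n) (z : Em m × Mat n) : Prop :=
  ∀ P lam, IsEigDecomp (Gmap g z) P lam →
    ∀ C : Mat n, C.IsSymm →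
      ∃ (v : Em m) (B : Mat n), B.IsSymm ∧
        (∀ i j, lam i = 0 → lam j = 0 → B i j = 0) ∧
        (∀ i j, lam i = 0 → lam j < 0 → B i j = 0) ∧
        (∀ i j, lam i < 0 → lam j < 0 → B i j = 0) ∧
        C = fderiv ℝ g z.1 v + P * B * Pᵀ

/-- The strict Robinson constraint qualification (SRCQ) at a KKT pair `z`:
`g'(x)[ℝᵐ] + {PBPᵀ : B ∈ Sⁿ, B_{ββ} ⪰ 0, B_{βγ} = 0, B_{γγ} = 0} = Sⁿ`. -/
def SRCQ (g : Em m → Mat n) (z : Em m × Mat n) : Prop :=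
  ∀ P lam, IsEigDecomp (Gmap g z) P lam →
    ∀ C : Mat n, C.IsSymm →
      ∃ (v : Em m) (B : Mat n), B.IsSymm ∧
        (∀ u : Fin n → ℝ, (∀ i, lam i ≠ 0 → u i = 0) →
          0 ≤ ∑ i, ∑ j, u i * B i j * u j) ∧
        (∀ i j, lam i = 0 → lam j < 0 → B i j = 0) ∧
        (∀ i j, lam i < 0 → lam j < 0 → B i j = 0) ∧
        C = fderiv ℝ g z.1 v + P * B * Pᵀ

/-- The quadratic form
`Q(z,v) = ⟨v, ∇²ₓₓL(x,y)v⟩ + 2·Σ_{i∈α}Σ_{j∈γ} (−λⱼ/λᵢ)·([Pᵀ(g'(x)v)P]_{ij})²`. -/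
def Qform (f : Em m → ℝ) (g : Em m → Mat n) (z : Em m × Mat n)
    (P : Mat n) (lam : Fin n → ℝ) (v : Em m) : ℝ :=
  ⟪v, hessL f g z.1 z.2 v⟫ +
    2 * ∑ i : Fin n, ∑ j : Fin n,
      (if 0 < lam i ∧ lam j < 0 then
        (-lam j / lam i) * ((Pᵀ * fderiv ℝ g z.1 v * P) i j) ^ 2 else 0)

/-- `v ∈ appl(z)`: the blocks `ββ`, `βγ`, `γγ` of `Pᵀ(g'(x)v)P` vanish. -/
def memAppl (g : Em m → Mat n) (z : Em m × Mat n)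
    (P : Mat n) (lam : Fin n → ℝ) (v : Em m) : Prop :=
  (∀ i j, lam i = 0 → lam j = 0 → (Pᵀ * fderiv ℝ g z.1 v * P) i j = 0) ∧
  (∀ i j, lam i = 0 → lam j < 0 → (Pᵀ * fderiv ℝ g z.1 v * P) i j = 0) ∧
  (∀ i j, lam i < 0 → lam j < 0 → (Pᵀ * fderiv ℝ g z.1 v * P) i j = 0)

/-- `v ∈ app(z)`: the blocks `βγ`, `γγ` of `Pᵀ(g'(x)v)P` vanish. -/
def memApp (g : Em m → Mat n) (z : Em m × Mat n)
    (P : Mat n) (lam : Fin n → ℝ) (v : Em m) : Prop :=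
  (∀ i j, lam i = 0 → lam j < 0 → (Pᵀ * fderiv ℝ g z.1 v * P) i j = 0) ∧
  (∀ i j, lam i < 0 → lam j < 0 → (Pᵀ * fderiv ℝ g z.1 v * P) i j = 0)

/-- The weak second order condition (W-SOC) at `z`: `Q(z,v) ≠ 0` for every nonzero
`v ∈ appl(z)`. -/
def WSOC (f : Em m → ℝ) (g : Em m → Mat n) (z : Em m × Mat n) : Prop :=
  ∀ P lam, IsEigDecomp (Gmap g z) P lam →
    ∀ v : Em m, v ≠ 0 → memAppl g z P lam v → Qform f g z P lam v ≠ 0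

/-- The strong second order sufficient condition (S-SOSC) at `z`: `Q(z,v) > 0` for every
nonzero `v ∈ app(z)`. -/
def SSOSC (f : Em m → ℝ) (g : Em m → Mat n) (z : Em m × Mat n) : Prop :=
  ∀ P lam, IsEigDecomp (Gmap g z) P lam →
    ∀ v : Em m, v ≠ 0 → memApp g z P lam v → 0 < Qform f g z P lam v

/-- The second order necessary condition (SONC) at `z`. -/
def SONC (f : Em m → ℝ) (g : Em m → Mat n) (z : Em m × Mat n) : Prop :=
  ∀ P lam, IsEigDecomp (Gmap g z) P lam →
    ∀ v : Em m, v ≠ 0 →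
      (∀ u : Fin n → ℝ, (∀ i, lam i ≠ 0 → u i = 0) →
        0 ≤ ∑ i, ∑ j, u i * (Pᵀ * fderiv ℝ g z.1 v * P) i j * u j) →
      memApp g z P lam v → 0 ≤ Qform f g z P lam v

/-- The W-SOC holds uniformly on a set `S`: there is `c > 0` with `Q(z,v) ≥ c‖v‖²` for
every `z ∈ S` (in `ℝᵐ × Sⁿ`) and every `v ∈ appl(z)`. -/
def UnifWSOC (f : Em m → ℝ) (g : Em m → Mat n) (S : Set (Em m × Mat n)) : Prop :=
  ∃ c : ℝ, 0 < c ∧ ∀ z ∈ S, z.2.IsSymm →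
    ∀ P lam, IsEigDecomp (Gmap g z) P lam →
      ∀ v : Em m, memAppl g z P lam v → c * ‖v‖ ^ 2 ≤ Qform f g z P lam v

/-- `H ∈ T_z`: `H ∈ Sⁿ` with `(PᵀHP)_{ββ} = 0`. -/
def memTz {n : ℕ} (P : Mat n) (lam : Fin n → ℝ) (H : Mat n) : Prop :=
  H.IsSymm ∧ ∀ i j, lam i = 0 → lam j = 0 → (Pᵀ * H * P) i j = 0

/-- `Δ ∈ N_{G(z)}M_{p,q}`: `Δ ∈ Sⁿ` and `(PᵀΔP)_{ij} = 0` whenever `i ∉ β` or `j ∉ β`. -/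
def memNormal {n : ℕ} (P : Mat n) (lam : Fin n → ℝ) (Δ : Mat n) : Prop :=
  Δ.IsSymm ∧ ∀ i j, (lam i ≠ 0 ∨ lam j ≠ 0) → (Pᵀ * Δ * P) i j = 0

/-- The map `ξ_z : T_z → Sⁿ`, `ξ_z(H) = P·M·Pᵀ`. -/
def xiMap {n : ℕ} (P : Mat n) (lam : Fin n → ℝ) (H : Mat n) : Mat n :=
  P * (Matrix.of fun i j =>
    if 0 < lam i ∧ 0 < lam j then (Pᵀ * H * P) i j
    else if 0 < lam i ∧ lam j = 0 then (Pᵀ * H * P) i j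
    else if lam i = 0 ∧ 0 < lam j then (Pᵀ * H * P) i j
    else if 0 < lam i ∧ lam j < 0 then (lam i / (lam i - lam j)) * (Pᵀ * H * P) i j
    else if lam i < 0 ∧ 0 < lam j then (lam j / (lam j - lam i)) * (Pᵀ * H * P) i j
    else 0) * Pᵀ

/-- The linear map `𝒜_z(v,H) = (∇²ₓₓL(x,y)v − ∇g(x)(g'(x)v) + ∇g(x)H, −g'(x)v + ξ_z(H))`. -/
def Amap (f : Em m → ℝ) (g : Em m → Mat n) (z : Em m × Mat n)
    (P : Mat n) (lam : Fin n → ℝ) (v : Em m) (H : Mat n) : Em m × Mat n :=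
  (hessL f g z.1 z.2 v - gradg g z.1 (fderiv ℝ g z.1 v) + gradg g z.1 H,
    - fderiv ℝ g z.1 v + xiMap P lam H)

/-- The positive inertia index of `A` is `p`. -/
def posInertiaIs {n : ℕ} (A : Mat n) (p : ℕ) : Prop :=
  ∃ P lam, IsEigDecomp A P lam ∧ {i : Fin n | 0 < lam i}.ncard = p

/-- The negative inertia index of `A` is `q`. -/
def negInertiaIs {n : ℕ} (A : Mat n) (q : ℕ) : Prop :=
  ∃ P lam, IsEigDecomp A P lam ∧ {i : Fin n | lam i < 0}.ncard = q

end
section StratumProofAux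

open Matrix

variable {n : ℕ}

/-- Orthogonal diagonalization, without the antitone requirement. -/
def OD (A P : Mat n) (d : Fin n → ℝ) : Prop :=
  IsOrthoMat P ∧ A = P * Matrix.diagonal d * Pᵀ

lemma OD.isSymm {A P : Mat n} {d : Fin n → ℝ} (h : OD A P d) : A.IsSymm := by
  rcases h with ⟨hP, rfl⟩
  simp [Matrix.IsSymm, Matrix.transpose_mul, Matrix.mul_assoc]

lemma OD.neg {A P : Mat n} {d : Fin n → ℝ} (h : OD A P d) :
    OD (-A) P (fun i => -d i) := by
  rcases h with ⟨hP, rfl⟩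
  refine ⟨hP, ?_⟩
  have hdiag : Matrix.diagonal (fun i => -d i) = -Matrix.diagonal d := by
    ext i j
    by_cases hij : i = j <;> simp [Matrix.diagonal_apply, hij]
  rw [hdiag, Matrix.mul_neg, Matrix.neg_mul]

lemma mulVec_Qt_Q {P : Mat n} (hP : IsOrthoMat P) (y : Fin n → ℝ) :
    Pᵀ *ᵥ (P *ᵥ y) = y := by
  rw [Matrix.mulVec_mulVec, hP.2, Matrix.one_mulVec]

lemma OD.quad_eq {A P : Mat n} {d : Fin n → ℝ} (h : OD A P d) (x : Fin n → ℝ) :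
    x ⬝ᵥ A *ᵥ x = ∑ i, d i * ((Pᵀ *ᵥ x) i) ^ 2 := by
  obtain ⟨hP, hA⟩ := h
  rw [hA, ← Matrix.mulVec_mulVec, ← Matrix.mulVec_mulVec,
    Matrix.dotProduct_mulVec, ← Matrix.mulVec_transpose]
  rw [dotProduct]
  exact Finset.sum_congr rfl fun i _ => by rw [Matrix.mulVec_diagonal]; ring

lemma dot_self_transform {P : Mat n} (hP : IsOrthoMat P) (x : Fin n → ℝ) :
    (Pᵀ *ᵥ x) ⬝ᵥ (Pᵀ *ᵥ x) = x ⬝ᵥ x := by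
  rw [Matrix.dotProduct_mulVec, Matrix.mulVec_transpose, Matrix.vecMul_vecMul,
    hP.1, Matrix.vecMul_one]

lemma dot_self_nonneg (x : Fin n → ℝ) : 0 ≤ x ⬝ᵥ x :=
  Finset.sum_nonneg fun i _ => mul_self_nonneg _

lemma dot_self_pos {x : Fin n → ℝ} (hx : x ≠ 0) : 0 < x ⬝ᵥ x := by
  obtain ⟨i, hi⟩ := Function.ne_iff.mp hx
  exact Finset.sum_pos' (fun j _ => mul_self_nonneg _)
    ⟨i, Finset.mem_univ i, mul_self_pos.mpr hi⟩

lemma quad_abs_le (E : Mat n) (x : Fin n → ℝ) :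
    |x ⬝ᵥ E *ᵥ x| ≤ ‖E‖ * (x ⬝ᵥ x) := by
  classical
  set f : Fin n × Fin n → ℝ := fun p => |E p.1 p.2| with hf
  set g : Fin n × Fin n → ℝ := fun p => |x p.1 * x p.2| with hg
  have h1 : x ⬝ᵥ E *ᵥ x = ∑ p : Fin n × Fin n, E p.1 p.2 * (x p.1 * x p.2) := by
    rw [← Finset.univ_product_univ, Finset.sum_product]
    simp only [dotProduct, Matrix.mulVec, Finset.mul_sum]
    exact Finset.sum_congr rfl fun i _ => Finset.sum_congr rfl fun j _ => by ring
  have h2 : |x ⬝ᵥ E *ᵥ x| ≤ ∑ p : Fin n × Fin n, f p * g p := by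
    rw [h1]
    refine (Finset.abs_sum_le_sum_abs _ _).trans (le_of_eq ?_)
    exact Finset.sum_congr rfl fun p _ => abs_mul _ _
  have hcs : (∑ p : Fin n × Fin n, f p * g p) ^ 2 ≤
      (∑ p : Fin n × Fin n, f p ^ 2) * ∑ p : Fin n × Fin n, g p ^ 2 :=
    Finset.sum_mul_sq_le_sq_mul_sq _ _ _
  have h0 : 0 ≤ ∑ p : Fin n × Fin n, f p * g p :=
    Finset.sum_nonneg fun p _ => mul_nonneg (abs_nonneg _) (abs_nonneg _)
  have hfg : ∑ p : Fin n × Fin n, f p * g p ≤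
      Real.sqrt (∑ p : Fin n × Fin n, f p ^ 2) *
        Real.sqrt (∑ p : Fin n × Fin n, g p ^ 2) := by
    calc ∑ p : Fin n × Fin n, f p * g p
        = Real.sqrt ((∑ p : Fin n × Fin n, f p * g p) ^ 2) := (Real.sqrt_sq h0).symm
      _ ≤ Real.sqrt ((∑ p : Fin n × Fin n, f p ^ 2) * ∑ p : Fin n × Fin n, g p ^ 2) :=
          Real.sqrt_le_sqrt hcs
      _ = _ := Real.sqrt_mul (Finset.sum_nonneg fun p _ => sq_nonneg _) _
  have hE : Real.sqrt (∑ p : Fin n × Fin n, f p ^ 2) = ‖E‖ := by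
    rw [Matrix.frobenius_norm_def, Real.sqrt_eq_rpow]
    congr 1
    simp only [Real.rpow_two]
    rw [← Finset.univ_product_univ, Finset.sum_product]
    exact Finset.sum_congr rfl fun i _ => Finset.sum_congr rfl fun j _ => by
      simp [hf, Real.norm_eq_abs, sq_abs]
  have hxx : (x ⬝ᵥ x) * (x ⬝ᵥ x) = ∑ p : Fin n × Fin n, (x p.1 * x p.2) ^ 2 := by
    rw [dotProduct, Finset.sum_mul_sum, ← Finset.univ_product_univ,
      Finset.sum_product]
    exact Finset.sum_congr rfl fun i _ => Finset.sum_congr rfl fun j _ => by ring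
  have hX : Real.sqrt (∑ p : Fin n × Fin n, g p ^ 2) = x ⬝ᵥ x := by
    have hgx : ∑ p : Fin n × Fin n, g p ^ 2 = (x ⬝ᵥ x) ^ 2 := by
      rw [pow_two (x ⬝ᵥ x), hxx]
      exact Finset.sum_congr rfl fun p _ => by simp [hg, mul_pow, sq_abs]
    rw [hgx, Real.sqrt_sq (dot_self_nonneg x)]
  calc |x ⬝ᵥ E *ᵥ x| ≤ ∑ p : Fin n × Fin n, f p * g p := h2
    _ ≤ _ := hfg
    _ = ‖E‖ * (x ⬝ᵥ x) := by rw [hE, hX]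

/-- Vectors supported on a given set of coordinates. -/
def coordSub (s : Set (Fin n)) : Submodule ℝ (Fin n → ℝ) where
  carrier := {y | ∀ j, j ∉ s → y j = 0}
  add_mem' := fun ha hb j hj => by simp [ha j hj, hb j hj]
  zero_mem' := fun j _ => rfl
  smul_mem' := fun c y hy j hj => by simp [hy j hj]

lemma ncard_pos_eq_card {d : Fin n → ℝ} :
    {i : Fin n | 0 < d i}.ncard = Fintype.card {i : Fin n // 0 < d i} := by
  classical
  rw [Set.ncard_eq_toFinset_card', Set.toFinset_card]
  exact Fintype.card_congr (Equiv.subtypeEquivRight fun i => Iff.rfl)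

lemma OD.exists_posdef_subspace {A P : Mat n} {d : Fin n → ℝ} (h : OD A P d) :
    ∃ V : Submodule ℝ (Fin n → ℝ),
      Module.finrank ℝ V = {i | 0 < d i}.ncard ∧
      (∀ x ∈ V, x ≠ 0 → 0 < x ⬝ᵥ A *ᵥ x) ∧
      (∀ c : ℝ, (∀ i, 0 < d i → c ≤ d i) → ∀ x ∈ V, c * (x ⬝ᵥ x) ≤ x ⬝ᵥ A *ᵥ x) := by
  classical
  obtain ⟨hP, hA⟩ := h
  set e : {i : Fin n // 0 < d i} → (Fin n → ℝ) := fun i => Pi.single i.1 1 with he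
  have hli : LinearIndependent ℝ e := by
    have heq : e = ⇑(Pi.basisFun ℝ (Fin n)) ∘ Subtype.val := by
      funext i; simp [he, Pi.basisFun_apply]
    rw [heq]
    exact (Pi.basisFun ℝ (Fin n)).linearIndependent.comp Subtype.val Subtype.val_injective
  set W : Submodule ℝ (Fin n → ℝ) := Submodule.span ℝ (Set.range e) with hW
  have hWsupp : W ≤ coordSub {i | 0 < d i} := by
    rw [hW, Submodule.span_le]
    rintro - ⟨i, rfl⟩
    intro j hj
    exact Pi.single_eq_of_ne (fun hji => hj (show (0:ℝ) < d j by rw [hji]; exact i.2)) 1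
  have hinj : Function.Injective P.mulVecLin := by
    intro a b hab
    have h2 := congrArg (fun v => Pᵀ *ᵥ v) hab
    simpa [Matrix.mulVecLin_apply, mulVec_Qt_Q hP] using h2
  refine ⟨W.map P.mulVecLin, ?_, ?_, ?_⟩
  · rw [← LinearEquiv.finrank_eq (Submodule.equivMapOfInjective P.mulVecLin hinj W)]
    rw [hW, finrank_span_eq_card hli, ncard_pos_eq_card]
  · rintro x hx hxne
    obtain ⟨y, hyW, rfl⟩ := Submodule.mem_map.mp hx
    have hsupp := hWsupp hyW
    have hy : Pᵀ *ᵥ (P.mulVecLin y) = y := mulVec_Qt_Q hP y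
    have hq : (P.mulVecLin y) ⬝ᵥ A *ᵥ (P.mulVecLin y) = ∑ i, d i * (y i) ^ 2 := by
      rw [OD.quad_eq ⟨hP, hA⟩, hy]
    rw [hq]
    have hyne : y ≠ 0 := by rintro rfl; exact hxne (map_zero _)
    obtain ⟨j, hj⟩ := Function.ne_iff.mp hyne
    have hdj : 0 < d j := by
      by_contra hdj
      exact hj (hsupp j hdj)
    refine Finset.sum_pos' (fun i _ => ?_) ⟨j, Finset.mem_univ j, ?_⟩
    · by_cases hdi : 0 < d i
      · exact mul_nonneg hdi.le (sq_nonneg _)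
      · rw [hsupp i hdi]; simp
    · have hy2 : 0 < y j * y j := mul_self_pos.mpr hj
      nlinarith
  · intro c hc x hx
    obtain ⟨y, hyW, rfl⟩ := Submodule.mem_map.mp hx
    have hsupp := hWsupp hyW
    have hy : Pᵀ *ᵥ (P.mulVecLin y) = y := mulVec_Qt_Q hP y
    have hq : (P.mulVecLin y) ⬝ᵥ A *ᵥ (P.mulVecLin y) = ∑ i, d i * (y i) ^ 2 := by
      rw [OD.quad_eq ⟨hP, hA⟩, hy]
    have hdot : (P.mulVecLin y) ⬝ᵥ (P.mulVecLin y) = ∑ i, (y i) ^ 2 := by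
      have h3 := dot_self_transform hP (P.mulVecLin y)
      rw [hy] at h3
      rw [← h3, dotProduct]
      exact Finset.sum_congr rfl fun i _ => (sq (y i)).symm
    rw [hq, hdot, Finset.mul_sum]
    refine Finset.sum_le_sum fun i _ => ?_
    by_cases hdi : 0 < d i
    · exact mul_le_mul_of_nonneg_right (hc i hdi) (sq_nonneg _)
    · rw [hsupp i hdi]; simp

lemma OD.finrank_le_of_posdef {A P : Mat n} {d : Fin n → ℝ} (h : OD A P d)
    (V : Submodule ℝ (Fin n → ℝ)) (hV : ∀ x ∈ V, x ≠ 0 → 0 < x ⬝ᵥ A *ᵥ x) :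
    Module.finrank ℝ V ≤ {i | 0 < d i}.ncard := by
  classical
  let φ : V →ₗ[ℝ] ({i : Fin n // 0 < d i} → ℝ) :=
    { toFun := fun x i => (Pᵀ *ᵥ (x : Fin n → ℝ)) i.1
      map_add' := fun a b => by funext i; simp [Matrix.mulVec_add]
      map_smul' := fun c a => by funext i; simp [Matrix.mulVec_smul] }
  have hinj : Function.Injective φ := by
    rw [injective_iff_map_eq_zero]
    intro x hx
    by_contra hxne
    have hxne' : (x : Fin n → ℝ) ≠ 0 := fun h0 => hxne (Subtype.ext h0)
    have hpos := hV x x.2 hxne'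
    have hzero : ∀ i : Fin n, 0 < d i → (Pᵀ *ᵥ (x : Fin n → ℝ)) i = 0 := by
      intro i hi
      exact congrFun hx ⟨i, hi⟩
    have hle : (x : Fin n → ℝ) ⬝ᵥ A *ᵥ (x : Fin n → ℝ) ≤ 0 := by
      rw [OD.quad_eq h]
      refine Finset.sum_nonpos fun i _ => ?_
      by_cases hdi : 0 < d i
      · rw [hzero i hdi]; simp
      · push_neg at hdi
        exact mul_nonpos_of_nonpos_of_nonneg hdi (sq_nonneg _)
    linarith
  have hle := LinearMap.finrank_le_finrank_of_injective hinj
  rwa [Module.finrank_fintype_fun_eq_card, ← ncard_pos_eq_card] at hle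

lemma OD.count_pos_eq {A P Q : Mat n} {d e : Fin n → ℝ}
    (h1 : OD A P d) (h2 : OD A Q e) :
    {i | 0 < d i}.ncard = {i | 0 < e i}.ncard := by
  obtain ⟨V, hV, hVpos, -⟩ := h1.exists_posdef_subspace
  obtain ⟨W, hW, hWpos, -⟩ := h2.exists_posdef_subspace
  have h12 := h2.finrank_le_of_posdef V hVpos
  have h21 := h1.finrank_le_of_posdef W hWpos
  omega

lemma OD.quad_nonpos {A P : Mat n} {d : Fin n → ℝ} (h : OD A P d)
    (hd : ∀ i, d i ≤ 0) (x : Fin n → ℝ) : x ⬝ᵥ A *ᵥ x ≤ 0 := by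
  rw [h.quad_eq]
  exact Finset.sum_nonpos fun i _ =>
    mul_nonpos_of_nonpos_of_nonneg (hd i) (sq_nonneg _)

lemma exists_sorted_decomp {B U : Mat n} {ν : Fin n → ℝ} (h : OD B U ν) :
    ∃ P lam, IsEigDecomp B P lam ∧ OD B P lam ∧
      {i | 0 < lam i}.ncard = {i | 0 < ν i}.ncard ∧
      {i | lam i < 0}.ncard = {i | ν i < 0}.ncard := by
  classical
  obtain ⟨hU, hB⟩ := h
  set σ : Equiv.Perm (Fin n) := Tuple.sort (fun i => -ν i) with hσ
  have hanti : Antitone (ν ∘ ⇑σ) := by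
    intro a b hab
    have h2 := Tuple.monotone_sort (fun i => -ν i) hab
    simpa using h2
  have horth : IsOrthoMat (U.submatrix id ⇑σ) := by
    constructor
    · rw [Matrix.transpose_submatrix,
        Matrix.submatrix_mul_equiv U Uᵀ id σ id, hU.1, Matrix.submatrix_id_id]
    · rw [Matrix.transpose_submatrix]
      have h2 : Uᵀ.submatrix ⇑σ id * U.submatrix id ⇑σ
          = (Uᵀ * U).submatrix ⇑σ ⇑σ := by
        have h3 := Matrix.submatrix_mul_equiv Uᵀ U ⇑σ (Equiv.refl (Fin n)) ⇑σ
        simpa using h3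
      rw [h2, hU.2, Matrix.submatrix_one_equiv]
  have hdec : B = (U.submatrix id ⇑σ) * Matrix.diagonal (ν ∘ ⇑σ) * (U.submatrix id ⇑σ)ᵀ := by
    rw [Matrix.transpose_submatrix, ← Matrix.submatrix_diagonal_equiv,
      Matrix.submatrix_mul_equiv U (Matrix.diagonal ν) id σ ⇑σ,
      Matrix.submatrix_mul_equiv (U * Matrix.diagonal ν) Uᵀ id σ id,
      Matrix.submatrix_id_id, hB]
  have hcount : ∀ t : Set (Fin n), {i | σ i ∈ t}.ncard = t.ncard := by
    intro t
    have h2 : {i | σ i ∈ t} = ⇑σ.symm '' t := by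
      rw [Equiv.image_eq_preimage_symm]
      simp [Set.preimage]
    rw [h2, Set.ncard_image_of_injective t σ.symm.injective]
  exact ⟨U.submatrix id ⇑σ, ν ∘ ⇑σ, ⟨horth, hanti, hdec⟩, ⟨horth, hdec⟩,
    hcount {i | 0 < ν i}, hcount {i | ν i < 0}⟩

/-- Master perturbation lemma for the positive inertia count. -/
lemma count_pos_of_perturb {A S N E : Mat n} {Q R P' : Mat n}
    {mu ρ lam' : Fin n → ℝ} {p : ℕ} {ε : ℝ}
    (hA : OD A Q mu) (hmup : {i | 0 < mu i}.ncard = p)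
    (hεle : ∀ i, 0 < mu i → ε ≤ mu i)
    (hS : OD S R ρ) (hρp : {i | 0 < ρ i}.ncard = p)
    (hN : ∀ x, x ⬝ᵥ N *ᵥ x ≤ 0)
    (hBE : S + N = A + E) (hE : ‖E‖ < ε)
    (hB : OD (S + N) P' lam') :
    {i | 0 < lam' i}.ncard = p := by
  obtain ⟨V, hVrank, -, hVc⟩ := hA.exists_posdef_subspace
  have hVpos : ∀ x ∈ V, x ≠ 0 → 0 < x ⬝ᵥ (S + N) *ᵥ x := by
    intro x hx hxne
    have h1 : x ⬝ᵥ (S + N) *ᵥ x = x ⬝ᵥ A *ᵥ x + x ⬝ᵥ E *ᵥ x := by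
      rw [hBE, Matrix.add_mulVec, dotProduct_add]
    have h2 := hVc ε hεle x hx
    have h3 := (abs_le.mp (quad_abs_le E x)).1
    have h4 : ‖E‖ * (x ⬝ᵥ x) < ε * (x ⬝ᵥ x) :=
      mul_lt_mul_of_pos_right hE (dot_self_pos hxne)
    linarith
  have hlow : p ≤ {i | 0 < lam' i}.ncard := by
    have h5 := hB.finrank_le_of_posdef V hVpos
    omega
  obtain ⟨W, hWrank, hWpos, -⟩ := hB.exists_posdef_subspace
  have hWS : ∀ x ∈ W, x ≠ 0 → 0 < x ⬝ᵥ S *ᵥ x := by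
    intro x hx hxne
    have h1 : x ⬝ᵥ (S + N) *ᵥ x = x ⬝ᵥ S *ᵥ x + x ⬝ᵥ N *ᵥ x := by
      rw [Matrix.add_mulVec, dotProduct_add]
    have h2 := hWpos x hx hxne
    have h3 := hN x
    linarith
  have hup : {i | 0 < lam' i}.ncard ≤ p := by
    have h6 := hS.finrank_le_of_posdef W hWS
    omega
  omega

end StratumProofAux

theorem stratum_stable_under_positive_part_perturbation {n p q : ℕ}
    (A : Mat n) (hA : A ∈ stratum n p q) :
    ∃ ε : ℝ, 0 < ε ∧ ∀ A'p ∈ stratum n p 0, ‖A'p - piPlus A‖ < ε →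
      A'p + (A - piPlus A) ∈ stratum n p q := by
  classical
  obtain ⟨P, lam, hdec, hp, hq⟩ := hA
  have hODP : OD A P lam := ⟨hdec.1, hdec.2.2⟩
  have hex : ∃ P lam, IsEigDecomp A P lam := ⟨P, lam, hdec⟩
  set Q := hex.choose with hQ
  set mu := hex.choose_spec.choose with hmu
  have hQmu : IsEigDecomp A Q mu := hex.choose_spec.choose_spec
  have hODQ : OD A Q mu := ⟨hQmu.1, hQmu.2.2⟩
  have hpiPlus : piPlus A = Q * Matrix.diagonal (fun i => max (mu i) 0) * Qᵀ := by
    rw [piPlus, dif_pos hex]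
  have hmup : {i | 0 < mu i}.ncard = p := by
    rw [hODQ.count_pos_eq hODP]; exact hp
  have hmuq : {i | mu i < 0}.ncard = q := by
    have h1 : {i : Fin n | mu i < 0} = {i | 0 < (fun i => -mu i) i} := by
      ext i; simp [neg_pos]
    have h2 : {i : Fin n | lam i < 0} = {i | 0 < (fun i => -lam i) i} := by
      ext i; simp [neg_pos]
    rw [h1, (hODQ.neg).count_pos_eq hODP.neg, ← h2]; exact hq
  have hODm : OD (A - piPlus A) Q (fun i => min (mu i) 0) := by
    refine ⟨hQmu.1, ?_⟩
    have hdiag : Matrix.diagonal (fun i => min (mu i) 0)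
        = Matrix.diagonal mu - Matrix.diagonal (fun i => max (mu i) 0) := by
      rw [Matrix.diagonal_sub]
      exact congrArg Matrix.diagonal (funext fun i => by
        have h3 := min_add_max (mu i) 0
        show min (mu i) 0 = mu i - max (mu i) 0
        linarith)
    rw [hpiPlus]
    calc A - Q * Matrix.diagonal (fun i => max (mu i) 0) * Qᵀ
        = Q * Matrix.diagonal mu * Qᵀ
            - Q * Matrix.diagonal (fun i => max (mu i) 0) * Qᵀ := by
          rw [← hQmu.2.2]
      _ = Q * (Matrix.diagonal mu - Matrix.diagonal (fun i => max (mu i) 0)) * Qᵀ := by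
          rw [Matrix.mul_sub, Matrix.sub_mul]
      _ = _ := by rw [← hdiag]
  set s : Finset ℝ :=
    insert 1 ((Finset.univ.filter fun i => mu i ≠ 0).image fun i => |mu i|) with hs
  have hsne : s.Nonempty := ⟨1, Finset.mem_insert_self _ _⟩
  refine ⟨s.min' hsne, ?_, ?_⟩
  · rw [Finset.lt_min'_iff]
    intro y hy
    rw [hs] at hy
    rcases Finset.mem_insert.mp hy with h1 | h1
    · rw [h1]; norm_num
    · obtain ⟨i, hi, rfl⟩ := Finset.mem_image.mp h1
      exact abs_pos.mpr (Finset.mem_filter.mp hi).2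
  set ε := s.min' hsne with hε
  have hεle : ∀ i, mu i ≠ 0 → ε ≤ |mu i| := by
    intro i hi
    exact Finset.min'_le _ _ (Finset.mem_insert_of_mem
      (Finset.mem_image_of_mem _ (Finset.mem_filter.mpr ⟨Finset.mem_univ i, hi⟩)))
  rintro A'p ⟨R, ρ, hRdec, hρp, hρq⟩ hnorm
  have hODS : OD A'p R ρ := ⟨hRdec.1, hRdec.2.2⟩
  have hρ0 : ∀ i, 0 ≤ ρ i := by
    intro i
    by_contra hi
    push_neg at hi
    have hempty : {j : Fin n | ρ j < 0} = ∅ :=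
      (Set.ncard_eq_zero (Set.toFinite _)).mp hρq
    exact absurd (show i ∈ {j : Fin n | ρ j < 0} from hi)
      (by rw [hempty]; exact Set.notMem_empty i)
  have hBsym : (A'p + (A - piPlus A)).IsSymm := by
    have h1 := hODS.isSymm
    have h2 := hODm.isSymm
    rw [Matrix.IsSymm] at *
    rw [Matrix.transpose_add, h1, h2]
  have hBH : (A'p + (A - piPlus A)).IsHermitian := by
    rw [Matrix.IsHermitian, Matrix.conjTranspose_eq_transpose_of_trivial]
    exact hBsym
  set ν := hBH.eigenvalues with hν
  set U : Mat n := (Matrix.IsHermitian.eigenvectorUnitary hBH : Mat n) with hU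
  have hUorth : IsOrthoMat U := by
    constructor
    · have h1 := (Matrix.mem_unitaryGroup_iff).mp
        (Matrix.IsHermitian.eigenvectorUnitary hBH).2
      rwa [Matrix.star_eq_conjTranspose,
        Matrix.conjTranspose_eq_transpose_of_trivial] at h1
    · have h1 := (Matrix.mem_unitaryGroup_iff').mp
        (Matrix.IsHermitian.eigenvectorUnitary hBH).2
      rwa [Matrix.star_eq_conjTranspose,
        Matrix.conjTranspose_eq_transpose_of_trivial] at h1
  have hODB0 : OD (A'p + (A - piPlus A)) U ν := by
    refine ⟨hUorth, ?_⟩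
    have h1 := hBH.spectral_theorem
    rw [Unitary.conjStarAlgAut_apply, Matrix.star_eq_conjTranspose,
      Matrix.conjTranspose_eq_transpose_of_trivial] at h1
    simpa using h1
  obtain ⟨P', lam', hdecB, hODB, hcpos, hcneg⟩ := exists_sorted_decomp hODB0
  have hεle' : ∀ i, 0 < mu i → ε ≤ mu i := fun i hi =>
    (hεle i (ne_of_gt hi)).trans_eq (abs_of_pos hi)
  have hNform : ∀ x, x ⬝ᵥ (A - piPlus A) *ᵥ x ≤ 0 :=
    hODm.quad_nonpos (fun i => min_le_right _ _)
  have hBE : A'p + (A - piPlus A) = A + (A'p - piPlus A) := by abel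
  have hposB : {i | 0 < lam' i}.ncard = p :=
    count_pos_of_perturb hODQ hmup hεle' hODS hρp hNform hBE hnorm hODB
  -- negative count
  have hODAneg : OD (-A) Q (fun i => -mu i) := hODQ.neg
  have hmuqneg : {i | 0 < (fun i => -mu i) i}.ncard = q := by
    have h1 : {i | 0 < (fun i => -mu i) i} = {i : Fin n | mu i < 0} := by
      ext i; simp [neg_pos]
    rw [h1]; exact hmuq
  have hεle'' : ∀ i, 0 < (fun i => -mu i) i → ε ≤ (fun i => -mu i) i := by
    intro i hi
    simp only at hi ⊢
    have h1 : mu i < 0 := by linarith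
    exact (hεle i (ne_of_lt h1)).trans_eq (abs_of_neg h1)
  have hODmneg : OD (-(A - piPlus A)) Q (fun i => -(min (mu i) 0)) := hODm.neg
  have hqS : {i | 0 < (fun i => -(min (mu i) 0)) i}.ncard = q := by
    have h1 : {i | 0 < (fun i => -(min (mu i) 0)) i} = {i : Fin n | mu i < 0} := by
      ext i
      simp only [Set.mem_setOf_eq, neg_pos, min_lt_iff, lt_irrefl, or_false]
    rw [h1]; exact hmuq
  have hODSneg : OD (-A'p) R (fun i => -ρ i) := hODS.neg
  have hNform' : ∀ x, x ⬝ᵥ (-A'p) *ᵥ x ≤ 0 :=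
    hODSneg.quad_nonpos (fun i => neg_nonpos.mpr (hρ0 i))
  have hBE' : -(A - piPlus A) + -A'p = -A + -(A'p - piPlus A) := by abel
  have hEnorm' : ‖-(A'p - piPlus A)‖ < ε := by rwa [norm_neg]
  have hODBneg : OD (-(A - piPlus A) + -A'p) P' (fun i => -lam' i) := by
    have h1 := hODB.neg
    have h2 : -(A'p + (A - piPlus A)) = -(A - piPlus A) + -A'p := by abel
    rwa [h2] at h1
  have hnegB' : {i | 0 < (fun i => -lam' i) i}.ncard = q :=
    count_pos_of_perturb hODAneg hmuqneg hεle'' hODmneg hqS hNform' hBE' hEnorm' hODBneg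
  have hnegB : {i | lam' i < 0}.ncard = q := by
    have h1 : {i : Fin n | lam' i < 0} = {i | 0 < (fun i => -lam' i) i} := by
      ext i; simp [neg_pos]
    rw [h1]; exact hnegB'
  exact ⟨P', lam', hdecB, hposB, hnegB⟩
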